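/- Suppose V : ℝ^n → ℝ is C¹ and x : [0,∞) → ℝ^n is a C¹ solution such that d/dt V(x(t)) ≤ -W(x(t)) for a continuous nonnegative function W, V is radially unbounded and bounded below, and W is uniformly continuous along the trajectory. Then x(t) is bounded on [0,∞) and W(x(t)) → 0 as t → ∞. -/

import Mathlib

open Filter

/-- LaSalle–Yoshizawa type theorem: if `V` is `C¹`, bounded below and radially unbounded,
`W` is continuous and nonnegative, `x` is a `C¹` trajectory with `d/dt V(x(t)) ≤ -W(x(t))`
for all `t ≥ 0`, and `W` is uniformly continuous along the trajectory, then `x` is bounded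
on `[0, ∞)` and `W(x(t)) → 0` as `t → ∞`. -/
theorem lasalle_yoshizawa
    (n : ℕ) (V : (Fin n → ℝ) → ℝ) (W : (Fin n → ℝ) → ℝ)
    (hV : ContDiff ℝ 1 V)
    (hVbelow : ∃ c : ℝ, ∀ z, c ≤ V z)
    (hVradial : ∀ M : ℝ, ∃ R : ℝ, ∀ z : Fin n → ℝ, R ≤ ‖z‖ → M ≤ V z)
    (hW : Continuous W) (hWnonneg : ∀ z, 0 ≤ W z)
    (x : ℝ → Fin n → ℝ) (hx : ContDiff ℝ 1 x)
    (hdecay : ∀ t ≥ (0 : ℝ), deriv (fun s => V (x s)) t ≤ -W (x t))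
    (hWUC : UniformContinuousOn (fun t => W (x t)) (Set.Ici 0)) :
    (∃ C : ℝ, ∀ t ≥ (0 : ℝ), ‖x t‖ ≤ C) ∧
    Tendsto (fun t => W (x t)) atTop (nhds 0) := by
  set g : ℝ → ℝ := fun s => V (x s) with hgdef
  have hgdiff : Differentiable ℝ g := (hV.comp hx).differentiable one_ne_zero
  obtain ⟨c, hc⟩ := hVbelow
  -- g is antitone on [0, ∞)
  have hanti : AntitoneOn g (Set.Ici 0) := by
    apply antitoneOn_of_deriv_nonpos (convex_Ici 0) hgdiff.continuous.continuousOn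
      hgdiff.differentiableOn
    intro t ht
    rw [interior_Ici] at ht
    exact (hdecay t ht.le).trans (neg_nonpos.mpr (hWnonneg _))
  constructor
  · obtain ⟨R, hR⟩ := hVradial (V (x 0) + 1)
    refine ⟨R, fun t ht => ?_⟩
    by_contra hlt
    push_neg at hlt
    have h1 := hR (x t) hlt.le
    have h2 : g t ≤ g 0 := hanti Set.self_mem_Ici ht ht
    simp only [hgdef] at h2
    linarith
  · by_contra hnot
    have hfreq : ∃ ε > 0, ∃ᶠ t in atTop, ε ≤ W (x t) := by
      by_contra h
      push_neg at h
      apply hnot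
      rw [Metric.tendsto_atTop]
      intro ε hε
      have h' := ((h ε hε).mono fun _ hh => not_le.mpr hh).and (eventually_ge_atTop (0:ℝ))
      rw [eventually_atTop] at h'
      obtain ⟨N, hN⟩ := h'
      refine ⟨N, fun t ht => ?_⟩
      obtain ⟨h1, _⟩ := hN t ht
      push_neg at h1
      rw [Real.dist_eq, abs_of_nonneg (by linarith [hWnonneg (x t)] : (0:ℝ) ≤ W (x t) - 0)]
      linarith
    obtain ⟨ε, hε, hfr⟩ := hfreq
    obtain ⟨δ, hδ, hδ'⟩ := (Metric.uniformContinuousOn_iff).mp hWUC (ε/2) (by linarith)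
    -- choose times tₙ ≥ n with W(x tₙ) ≥ ε
    have hseq : ∀ N : ℕ, ∃ b ≥ (N:ℝ), ε ≤ W (x b) := fun N =>
      Filter.frequently_atTop.mp hfr (N:ℝ)
    choose t ht1 ht2 using hseq
    have htnn : ∀ N : ℕ, (0:ℝ) ≤ t N := fun N => le_trans (Nat.cast_nonneg N) (ht1 N)
    -- key decrease estimate over each window
    have hkey : ∀ N : ℕ, g (t N + δ/2) ≤ g (t N) - ε/2 * (δ/2) := by
      intro N
      set a := t N with ha
      have ha0 : 0 ≤ a := htnn N
      have hder : ∀ s : ℝ, HasDerivAt (fun u => g u + ε/2 * u) (deriv g s + ε/2) s := by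
        intro s
        have := (hgdiff s).hasDerivAt.add ((hasDerivAt_id s).const_mul (ε/2))
        exact this.congr_deriv (by ring)
      have hφ : AntitoneOn (fun s => g s + ε/2 * s) (Set.Icc a (a + δ/2)) := by
        apply antitoneOn_of_deriv_nonpos (convex_Icc _ _)
          ((hgdiff.continuous.add (continuous_const.mul continuous_id)).continuousOn)
          (fun s _ => (hder s).differentiableAt.differentiableWithinAt)
        intro s hs
        rw [interior_Icc] at hs
        have hs0 : (0:ℝ) ≤ s := le_trans ha0 hs.1.le
        have hdist : dist s a < δ := by
          rw [Real.dist_eq, abs_of_nonneg (by linarith [hs.1.le] : (0:ℝ) ≤ s - a)]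
          linarith [hs.2]
        have hclose := hδ' s (Set.mem_Ici.mpr hs0) a (Set.mem_Ici.mpr ha0) hdist
        rw [Real.dist_eq] at hclose
        have hWs : ε/2 < W (x s) := by
          have := abs_lt.mp hclose
          have := ht2 N
          linarith [this]
        change deriv (fun u => g u + ε/2 * u) s ≤ 0
        rw [(hder s).deriv]
        have := hdecay s hs0
        simp only [hgdef] at this ⊢
        linarith
      have hmem1 : a ∈ Set.Icc a (a + δ/2) := ⟨le_refl a, by linarith⟩
      have hmem2 : a + δ/2 ∈ Set.Icc a (a + δ/2) := ⟨by linarith, le_refl _⟩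
      have := hφ hmem1 hmem2 (by linarith)
      simp only at this
      linarith
    -- the limit of g along the trajectory
    set h : ℝ → ℝ := fun s => g (max s 0) with hhdef
    have hhanti : Antitone h := fun s u hsu =>
      hanti (Set.mem_Ici.mpr (le_max_right s 0)) (Set.mem_Ici.mpr (le_max_right u 0))
        (max_le_max hsu le_rfl)
    have hbdd : BddBelow (Set.range h) := ⟨c, by rintro y ⟨s, rfl⟩; exact hc _⟩
    have hlim := tendsto_atTop_ciInf hhanti hbdd
    have httop : Tendsto t atTop atTop :=
      tendsto_atTop_mono ht1 tendsto_natCast_atTop_atTop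
    have httop2 : Tendsto (fun N => t N + δ/2) atTop atTop :=
      tendsto_atTop_add_const_right _ _ httop
    have hd : Tendsto (fun N => h (t N) - h (t N + δ/2)) atTop (nhds 0) := by
      have := (hlim.comp httop).sub (hlim.comp httop2)
      simpa using this
    have hge : (0:ℝ) ≥ ε/2 * (δ/2) := by
      refine ge_of_tendsto hd (Eventually.of_forall fun N => ?_)
      have e1 : h (t N) = g (t N) := by
        simp only [hhdef, max_eq_left (htnn N)]
      have e2 : h (t N + δ/2) = g (t N + δ/2) := by
        have : (0:ℝ) ≤ t N + δ/2 := by linarith [htnn N]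
        simp only [hhdef, max_eq_left this]
      rw [e1, e2]
      linarith [hkey N]
    nlinarith
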